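/- Let J ≥ 1 be an integer, Γ ≥ 1 a real number, and π : Fin J → ℝ with 0 < π_j < 1 for all j. Then the following are equivalent: (i) for all j, k, π_j(1 − π_k)/(π_k(1 − π_j)) ≤ Γ; (ii) there exist α ∈ ℝ and u : Fin J → ℝ with 0 ≤ u_j ≤ 1 for all j such that log(π_j/(1 − π_j)) = α + (log Γ)·u_j for every j. -/

import Mathlib

/-- Rosenbaum (2002), Chapter 4, Proposition 12: within a matched set of `J`
units, the odds-ratio bound `π_j(1−π_k)/(π_k(1−π_j)) ≤ Γ` for all pairs is
equivalent to the existence of the logistic sensitivity model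
`log(π_j/(1−π_j)) = α + (log Γ)·u_j` with `u_j ∈ [0,1]`. -/
theorem rosenbaum_odds_model_equiv
    (J : ℕ) (hJ : 1 ≤ J) (Γ : ℝ) (hΓ : 1 ≤ Γ)
    (pr : Fin J → ℝ) (hpr : ∀ j, 0 < pr j ∧ pr j < 1) :
    (∀ j k, pr j * (1 - pr k) / (pr k * (1 - pr j)) ≤ Γ) ↔
      ∃ (α : ℝ) (u : Fin J → ℝ), (∀ j, 0 ≤ u j ∧ u j ≤ 1) ∧
        ∀ j, Real.log (pr j / (1 - pr j)) = α + Real.log Γ * u j := by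
  have hΓ0 : (0:ℝ) < Γ := lt_of_lt_of_le one_pos hΓ
  set L : Fin J → ℝ := fun j => Real.log (pr j / (1 - pr j)) with hLdef
  have hpos : ∀ j, 0 < pr j / (1 - pr j) := fun j =>
    div_pos (hpr j).1 (by linarith [(hpr j).2])
  have hratio : ∀ j k, pr j * (1 - pr k) / (pr k * (1 - pr j))
      = (pr j / (1 - pr j)) / (pr k / (1 - pr k)) := by
    intro j k
    have h1 := (hpr j).1; have h2 := (hpr j).2
    have h3 := (hpr k).1; have h4 := (hpr k).2
    field_simp
  have hiff : ∀ j k, (pr j * (1 - pr k) / (pr k * (1 - pr j)) ≤ Γ) ↔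
      L j - L k ≤ Real.log Γ := by
    intro j k
    rw [hratio, ← Real.log_div (ne_of_gt (hpos j)) (ne_of_gt (hpos k))]
    exact (Real.log_le_log_iff (div_pos (hpos j) (hpos k)) hΓ0).symm
  constructor
  · intro h
    obtain ⟨k0, -, hk0⟩ := Finset.exists_min_image Finset.univ L
      ⟨⟨0, hJ⟩, Finset.mem_univ _⟩
    by_cases hΓ1 : Γ = 1
    · refine ⟨L k0, fun _ => 0, fun j => ⟨le_refl 0, zero_le_one⟩, fun j => ?_⟩
      have h1 : L j - L k0 ≤ Real.log Γ := (hiff j k0).mp (h j k0)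
      have h2 : L k0 - L j ≤ Real.log Γ := (hiff k0 j).mp (h k0 j)
      rw [hΓ1, Real.log_one] at h1 h2
      show L j = L k0 + Real.log Γ * 0
      rw [mul_zero, add_zero]
      linarith
    · have hlog : 0 < Real.log Γ := Real.log_pos (lt_of_le_of_ne hΓ (Ne.symm hΓ1))
      refine ⟨L k0, fun j => (L j - L k0) / Real.log Γ, fun j => ⟨?_, ?_⟩, fun j => ?_⟩
      · exact div_nonneg (by linarith [hk0 j (Finset.mem_univ j)]) hlog.le
      · rw [div_le_one hlog]
        exact (hiff j k0).mp (h j k0)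
      · show L j = L k0 + Real.log Γ * ((L j - L k0) / Real.log Γ)
        field_simp
        ring
  · rintro ⟨α, u, hu, heq⟩ j k
    apply (hiff j k).mpr
    show L j - L k ≤ Real.log Γ
    simp only [hLdef]
    rw [heq j, heq k]
    have h1 := (hu j).2; have h2 := (hu k).1
    have hlogΓ : 0 ≤ Real.log Γ := Real.log_nonneg hΓ
    nlinarith
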